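/- Let C be an associative cone in ℝ⁷ with link Σ ⊂ S⁶ and let 𝐃_C be the Fueter operator on NC and 𝐃_Σ the Dirac operator on NΣ. Then for every ν_Σ ∈ C^∞(N_{S⁶}Σ), every λ ∈ ℝ and every j ∈ ℕ₀: (a) 𝐃_C = J∂_r + (1/r)𝐃_Σ + (2/r)J; (b) 𝐃_C(r^{λ−1} ν_Σ) = r^{λ−2}(𝐃_Σ ν_Σ + (λ+1)Jν_Σ); (c) 𝐃_C(r^{λ−1}(log r)^j ν_Σ) = r^{λ−2}(log r)^j(𝐃_Σ ν_Σ + (λ+1)Jν_Σ) + j r^{λ−2}(log r)^{j−1} Jν_Σ. -/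

import Mathlib

open scoped RealInnerProductSpace

noncomputable section

/-- ℝ⁷ with its Euclidean inner product. -/
abbrev E7 : Type := EuclideanSpace ℝ (Fin 7)

/-- (e^i ∧ e^j ∧ e^k)(x, y, z). -/
def tripleDet (i j k : Fin 7) (x y z : E7) : ℝ :=
  Matrix.det !![x i, y i, z i; x j, y j, z j; x k, y k, z k]

/-- The standard G₂ 3-form
φₑ = e^{123} − e^{145} − e^{167} − e^{246} − e^{275} − e^{347} − e^{356}
(indices shifted to start from 0). -/
def phiE (x y z : E7) : ℝ :=
  tripleDet 0 1 2 x y z - tripleDet 0 3 4 x y z - tripleDet 0 5 6 x y z -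
    tripleDet 1 3 5 x y z - tripleDet 1 6 4 x y z - tripleDet 2 3 6 x y z -
    tripleDet 2 4 5 x y z

/-- The octonionic cross product on ℝ⁷ = Im 𝕆, characterized by ⟨u × v, w⟩ = φₑ(u,v,w). -/
def cross7 (u v : E7) : E7 :=
  (EuclideanSpace.equiv (Fin 7) ℝ).symm fun k => phiE u v (EuclideanSpace.single k 1)

/-- Tangential projection onto T_x S⁶ (for ‖x‖ = 1): w ↦ w − ⟨x,w⟩x. -/
def tproj (x w : E7) : E7 := w - ⟪x, w⟫ • x

/-- Chart domain for a local parametrization of a surface Σ ⊂ S⁶. -/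
abbrev Pt : Type := ℝ × ℝ

/-- The standard complex structure j₀ of the chart ℝ². -/
def j0 (c : Pt) : Pt := (-c.2, c.1)

/-- The span of the position vector and the tangent plane of the parametrized surface
F : ℝ² → Σ ⊂ S⁶ at F(p). -/
def TanSpan (F : Pt → E7) (p : Pt) : Submodule ℝ E7 :=
  Submodule.span ℝ {F p, fderiv ℝ F p (1, 0), fderiv ℝ F p (0, 1)}

/-- The normal space N_{F(p)}Σ of Σ in S⁶. -/
def Nsp (F : Pt → E7) (p : Pt) : Submodule ℝ E7 := (TanSpan F p)ᗮ

/-- Orthogonal projection onto the normal space of Σ in S⁶. -/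
def PN (F : Pt → E7) (p : Pt) (w : E7) : E7 := ((Nsp F p).orthogonalProjection w : E7)

/-- The normal connection ∇^⊥ (induced by the Levi–Civita connection of the round S⁶) on normal
vector fields ξ along Σ, in the chart direction c. -/
def covN (F ξ : Pt → E7) (p : Pt) (c : Pt) : E7 := PN F p (fderiv ℝ ξ p c)

/-- The normal part ∇̃^⊥ of the characteristic SU(3) connection
∇̃_u ξ = ∇_u ξ + ½ (∇_u J)(Jξ), in the chart direction c;
here (∇_u J)v = u ×_{S⁶} v on S⁶. -/
def covT (F ξ : Pt → E7) (p : Pt) (c : Pt) : E7 :=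
  PN F p (fderiv ℝ ξ p c + (2 : ℝ)⁻¹ • cross7 (fderiv ℝ F p c) (cross7 (F p) (ξ p)))

/-- The Dirac operator 𝐃_Σ = Σᵢ fᵢ × ∇̃^⊥_{fᵢ} of the link, in a conformal chart
(fᵢ = ∂ᵢF/ρ with ρ = ‖∂₁F‖ = ‖∂₂F‖). -/
def DSigC (F ξ : Pt → E7) (p : Pt) : E7 :=
  (‖fderiv ℝ F p (1, 0)‖ ^ 2)⁻¹ •
    (cross7 (fderiv ℝ F p (1, 0)) (covT F ξ p (1, 0)) +
      cross7 (fderiv ℝ F p (0, 1)) (covT F ξ p (0, 1)))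

/-- The Fueter operator 𝐃_C = Σₐ eₐ × ∇^⊥_{C,eₐ} of the cone C over Σ, acting on Euclidean
normal vector fields w(r,p) along the cone, written in the oriented orthonormal frame
{∂_r = F(p), f₁, f₂}. -/
def DconeE (F : Pt → E7) (w : ℝ → Pt → E7) (r : ℝ) (p : Pt) : E7 :=
  cross7 (F p) (PN F p (deriv (fun s => w s p) r)) +
    (r * ‖fderiv ℝ F p (1, 0)‖ ^ 2)⁻¹ •
      (cross7 (fderiv ℝ F p (1, 0)) (PN F p (fderiv ℝ (w r) p (1, 0))) +
        cross7 (fderiv ℝ F p (0, 1)) (PN F p (fderiv ℝ (w r) p (0, 1))))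

/-- The Fueter operator 𝐃_C on sections u of NC ≅ π*NΣ, under the canonical identification of
sections of π*NΣ with Euclidean normal fields (|r^{λ−1}ν|_{g_{NC}} = r^λ |ν|, i.e. u ↦ r·u). -/
def Dcone (F : Pt → E7) (u : ℝ → Pt → E7) (r : ℝ) (p : Pt) : E7 :=
  r⁻¹ • DconeE F (fun s q => s • u s q) r p


/-! ### Auxiliary lemmas -/

section AuxCross

lemma cross7_apply' (u v : E7) (k : Fin 7) :
    cross7 u v k = phiE u v (EuclideanSpace.single k 1) := rfl

lemma cross7_c0 (u v : E7) : cross7 u v 0 =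
    (u 1*v 2 - u 2*v 1) - (u 3*v 4 - u 4*v 3) - (u 5*v 6 - u 6*v 5) := by
  simp [cross7_apply', phiE, tripleDet, Matrix.det_fin_three, EuclideanSpace.single_apply,
    Matrix.vecHead, Matrix.vecTail, Function.comp]; ring
lemma cross7_c1 (u v : E7) : cross7 u v 1 =
    -(u 0*v 2 - u 2*v 0) - (u 3*v 5 - u 5*v 3) + (u 4*v 6 - u 6*v 4) := by
  simp [cross7_apply', phiE, tripleDet, Matrix.det_fin_three, EuclideanSpace.single_apply,
    Matrix.vecHead, Matrix.vecTail, Function.comp]; ring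
lemma cross7_c2 (u v : E7) : cross7 u v 2 =
    (u 0*v 1 - u 1*v 0) - (u 3*v 6 - u 6*v 3) - (u 4*v 5 - u 5*v 4) := by
  simp [cross7_apply', phiE, tripleDet, Matrix.det_fin_three, EuclideanSpace.single_apply,
    Matrix.vecHead, Matrix.vecTail, Function.comp]; ring
lemma cross7_c3 (u v : E7) : cross7 u v 3 =
    (u 0*v 4 - u 4*v 0) + (u 1*v 5 - u 5*v 1) + (u 2*v 6 - u 6*v 2) := by
  simp [cross7_apply', phiE, tripleDet, Matrix.det_fin_three, EuclideanSpace.single_apply,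
    Matrix.vecHead, Matrix.vecTail, Function.comp]; ring
lemma cross7_c4 (u v : E7) : cross7 u v 4 =
    -(u 0*v 3 - u 3*v 0) - (u 1*v 6 - u 6*v 1) + (u 2*v 5 - u 5*v 2) := by
  simp [cross7_apply', phiE, tripleDet, Matrix.det_fin_three, EuclideanSpace.single_apply,
    Matrix.vecHead, Matrix.vecTail, Function.comp]; ring
lemma cross7_c5 (u v : E7) : cross7 u v 5 =
    (u 0*v 6 - u 6*v 0) - (u 1*v 3 - u 3*v 1) - (u 2*v 4 - u 4*v 2) := by
  simp [cross7_apply', phiE, tripleDet, Matrix.det_fin_three, EuclideanSpace.single_apply,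
    Matrix.vecHead, Matrix.vecTail, Function.comp]; ring
lemma cross7_c6 (u v : E7) : cross7 u v 6 =
    -(u 0*v 5 - u 5*v 0) + (u 1*v 4 - u 4*v 1) - (u 2*v 3 - u 3*v 2) := by
  simp [cross7_apply', phiE, tripleDet, Matrix.det_fin_three, EuclideanSpace.single_apply,
    Matrix.vecHead, Matrix.vecTail, Function.comp]; ring

lemma inner7 (u v : E7) : ⟪u, v⟫ = ∑ i : Fin 7, u i * v i := by
  simp [PiLp.inner_apply, RCLike.inner_apply]
  exact Finset.sum_congr rfl fun i _ => mul_comm _ _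

attribute [local simp] cross7_c0 cross7_c1 cross7_c2 cross7_c3 cross7_c4 cross7_c5 cross7_c6

lemma cross7_antisymm (u v : E7) : cross7 u v = - cross7 v u := by
  ext k; fin_cases k <;> simp <;> ring

lemma cross7_self (u : E7) : cross7 u u = 0 := by
  ext k; fin_cases k <;> simp <;> ring

lemma cross7_zero_right (u : E7) : cross7 u 0 = 0 := by
  ext k; fin_cases k <;> simp

lemma cross7_add_right (u v w : E7) : cross7 u (v + w) = cross7 u v + cross7 u w := by
  ext k; fin_cases k <;> simp <;> ring

lemma cross7_smul_right (c : ℝ) (u v : E7) : cross7 u (c • v) = c • cross7 u v := by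
  ext k; fin_cases k <;> simp <;> ring

lemma inner_cross7_cyclic (u v w : E7) : ⟪cross7 u v, w⟫ = ⟪cross7 v w, u⟫ := by
  simp [inner7, Fin.sum_univ_seven]; ring

lemma cross7_cross_self (u v : E7) : cross7 u (cross7 u v) = ⟪u,v⟫ • u - ⟪u,u⟫ • v := by
  rw [inner7 u v, inner7 u u]; ext k; fin_cases k <;>
    simp [inner7, Fin.sum_univ_seven, PiLp.sub_apply, PiLp.smul_apply, smul_eq_mul] <;> ring

lemma cross7_triple_sym (u v w : E7) :
    cross7 u (cross7 v w) + cross7 v (cross7 u w)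
      = ⟪u,w⟫ • v + ⟪v,w⟫ • u - (2*⟪u,v⟫) • w := by
  ext k; fin_cases k <;>
    simp [inner7, Fin.sum_univ_seven, PiLp.sub_apply, PiLp.add_apply, PiLp.smul_apply,
      smul_eq_mul] <;> ring

lemma inner_cross7_left (u v : E7) : ⟪cross7 u v, u⟫ = 0 := by
  have h := inner_cross7_cyclic u v u
  rw [cross7_antisymm v u, inner_neg_left] at h
  linarith

lemma inner_cross7_right (u v : E7) : ⟪cross7 u v, v⟫ = 0 := by
  rw [inner_cross7_cyclic, cross7_self, inner_zero_left]

end AuxCross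

section AuxNsp

lemma mem_Nsp_iff (F : Pt → E7) (p : Pt) (w : E7) :
    w ∈ Nsp F p ↔ ⟪F p, w⟫ = 0 ∧ ⟪fderiv ℝ F p (1,0), w⟫ = 0 ∧ ⟪fderiv ℝ F p (0,1), w⟫ = 0 := by
  constructor
  · intro h
    rw [Nsp, Submodule.mem_orthogonal] at h
    exact ⟨h _ (Submodule.subset_span (by simp [TanSpan])),
      h _ (Submodule.subset_span (by simp [TanSpan])),
      h _ (Submodule.subset_span (by simp [TanSpan]))⟩
  · rintro ⟨h1, h2, h3⟩
    rw [Nsp, Submodule.mem_orthogonal]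
    intro u hu
    rw [TanSpan] at hu
    induction hu using Submodule.span_induction with
    | mem y hy => rcases hy with rfl | rfl | rfl <;> assumption
    | zero => simp
    | add y z _ _ hy hz => rw [inner_add_left, hy, hz]; ring
    | smul c y _ hy => rw [inner_smul_left, hy]; simp

lemma PN_of_mem (F : Pt → E7) (p : Pt) {w : E7} (h : w ∈ Nsp F p) : PN F p w = w := by
  rw [PN]; exact (Nsp F p).starProjection_eq_self_iff.mpr h

lemma PN_add (F : Pt → E7) (p : Pt) (v w : E7) : PN F p (v + w) = PN F p v + PN F p w := by
  simp [PN, map_add]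

lemma PN_smul (F : Pt → E7) (p : Pt) (c : ℝ) (w : E7) : PN F p (c • w) = c • PN F p w := by
  simp [PN, map_smul]

lemma deriv_mem_of_mem {K : Submodule ℝ E7} {g : ℝ → E7} {d : E7} {r : ℝ}
    (hg : HasDerivAt g d r) (h : ∀ s, g s ∈ K) : d ∈ K := by
  have hcl : IsClosed (K : Set E7) := Submodule.closed_of_finiteDimensional K
  have ht := hasDerivAt_iff_tendsto_slope.mp hg
  exact hcl.mem_of_tendsto ht (Filter.Eventually.of_forall fun s =>
    K.smul_mem _ (K.sub_mem (h s) (h r)))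

end AuxNsp

section AuxMain

variable {F : Pt → E7} {p : Pt}

/-- The key pointwise geometric identity. -/
lemma DSig_rel (F : Pt → E7) (p : Pt)
    (hxx : ⟪F p, F p⟫ = 1)
    (hxa : ⟪F p, fderiv ℝ F p (1, 0)⟫ = 0)
    (hbdef : fderiv ℝ F p (0, 1) = cross7 (F p) (fderiv ℝ F p (1, 0)))
    (ha0 : fderiv ℝ F p (1, 0) ≠ 0)
    (ξ : Pt → E7) (hmem : ξ p ∈ Nsp F p) :
    (‖fderiv ℝ F p (1, 0)‖ ^ 2)⁻¹ •
        (cross7 (fderiv ℝ F p (1, 0)) (PN F p (fderiv ℝ ξ p (1, 0))) +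
          cross7 (fderiv ℝ F p (0, 1)) (PN F p (fderiv ℝ ξ p (0, 1))))
      = DSigC F ξ p + cross7 (F p) (ξ p) := by
  set x := F p with hx
  set a := fderiv ℝ F p (1, 0) with ha
  set b := fderiv ℝ F p (0, 1) with hbd
  set n := ξ p with hn
  set m := cross7 x n with hm
  obtain ⟨hn1, hn2, hn3⟩ := (mem_Nsp_iff F p n).mp hmem
  have hax : ⟪a, x⟫ = 0 := by rw [real_inner_comm]; exact hxa
  have haN : ‖a‖ ^ 2 ≠ 0 := pow_ne_zero 2 (norm_ne_zero_iff.mpr ha0)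
  have hnorm : ‖a‖ ^ 2 = ⟪a, a⟫ := (real_inner_self_eq_norm_sq a).symm
  have haa : ⟪a, a⟫ ≠ 0 := hnorm ▸ haN
  have hxb : cross7 x b = -a := by
    rw [hbdef, cross7_cross_self, hxa, hxx]; simp
  have hab : cross7 a b = ⟪a,a⟫ • x := by
    have h := cross7_triple_sym a x a
    rw [cross7_self, cross7_zero_right, hxa, hax] at h
    simpa [← hbdef] using h
  have hxm : ⟪x, m⟫ = 0 := by rw [real_inner_comm, hm]; exact inner_cross7_left x n
  have ham : ⟪a, m⟫ = 0 := by
    rw [real_inner_comm, hm, inner_cross7_cyclic, inner_cross7_cyclic, cross7_antisymm a x,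
      inner_neg_left, ← hbdef, hn3, neg_zero]
  have hbm : ⟪b, m⟫ = 0 := by
    rw [real_inner_comm, hm, inner_cross7_cyclic, inner_cross7_cyclic, cross7_antisymm b x,
      inner_neg_left, hxb, inner_neg_left, neg_neg, hn2]
  have hbb : ⟪b, b⟫ = ⟪a, a⟫ := by
    have h := inner_cross7_cyclic x a b
    rw [← hbdef, hab, real_inner_smul_left, hxx, mul_one] at h
    exact h
  have hamem : cross7 a m ∈ Nsp F p := by
    rw [mem_Nsp_iff]
    refine ⟨?_, ?_, ?_⟩
    · rw [real_inner_comm, inner_cross7_cyclic, inner_cross7_cyclic, ← hbdef]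
      exact hbm
    · rw [real_inner_comm]; exact inner_cross7_left a m
    · rw [real_inner_comm, inner_cross7_cyclic, inner_cross7_cyclic, cross7_antisymm b a,
        inner_neg_left, hab, real_inner_smul_left, hxm, mul_zero, neg_zero]
  have hbmem : cross7 b m ∈ Nsp F p := by
    rw [mem_Nsp_iff]
    refine ⟨?_, ?_, ?_⟩
    · rw [real_inner_comm, inner_cross7_cyclic, inner_cross7_cyclic, hxb, inner_neg_left, ham,
        neg_zero]
    · rw [real_inner_comm, inner_cross7_cyclic, inner_cross7_cyclic, hab,
        real_inner_smul_left, hxm, mul_zero]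
    · rw [real_inner_comm]; exact inner_cross7_left b m
  have hc1 : covT F ξ p (1,0)
      = PN F p (fderiv ℝ ξ p (1,0)) + (2:ℝ)⁻¹ • cross7 a m := by
    rw [covT, PN_add, PN_smul, PN_of_mem F p hamem]
  have hc2 : covT F ξ p (0,1)
      = PN F p (fderiv ℝ ξ p (0,1)) + (2:ℝ)⁻¹ • cross7 b m := by
    rw [covT, PN_add, PN_smul, PN_of_mem F p hbmem]
  rw [DSigC, hc1, hc2, cross7_add_right, cross7_add_right, cross7_smul_right, cross7_smul_right,
    cross7_cross_self, cross7_cross_self, ham, hbm, hbb]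
  simp only [← ha, ← hbd, ← hx]
  rw [hnorm]
  have hS : (∑ i : Fin 7, a i * a i) ≠ 0 := by rw [← inner7]; exact haa
  match_scalars <;> field_simp [hS] <;> ring

end AuxMain

section AuxParts

lemma partA (F : Pt → E7) (p : Pt)
    (hxx : ⟪F p, F p⟫ = 1)
    (hxa : ⟪F p, fderiv ℝ F p (1, 0)⟫ = 0)
    (hbdef : fderiv ℝ F p (0, 1) = cross7 (F p) (fderiv ℝ F p (1, 0)))
    (ha0 : fderiv ℝ F p (1, 0) ≠ 0)
    (r : ℝ) (hr : 0 < r)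
    (u : ℝ → Pt → E7) (hus : ∀ q, Differentiable ℝ fun s => u s q)
    (huq : ∀ s, Differentiable ℝ (u s)) (hmem : ∀ s q, u s q ∈ Nsp F q) :
    Dcone F u r p =
      cross7 (F p) (deriv (fun s => u s p) r) + r⁻¹ • DSigC F (u r) p +
        (2 / r) • cross7 (F p) (u r p) := by
  have haN : ‖fderiv ℝ F p (1, 0)‖ ^ 2 ≠ 0 := pow_ne_zero 2 (norm_ne_zero_iff.mpr ha0)
  have hd : HasDerivAt (fun s => s • u s p)
      (r • deriv (fun s => u s p) r + u r p) r := by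
    have h := (hasDerivAt_id' r).smul ((hus p) r).hasDerivAt
    rw [one_smul] at h
    exact h
  have hdm : (r • deriv (fun s => u s p) r + u r p) ∈ Nsp F p :=
    deriv_mem_of_mem hd fun s => Submodule.smul_mem _ _ (hmem s p)
  have hfd : fderiv ℝ (fun q => r • u r q) p = r • fderiv ℝ (u r) p :=
    fderiv_fun_const_smul ((huq r) p) r
  have hrel := DSig_rel F p hxx hxa hbdef ha0 (u r) (hmem r p)
  have hDsub : DSigC F (u r) p =
      (‖fderiv ℝ F p (1, 0)‖ ^ 2)⁻¹ •
        (cross7 (fderiv ℝ F p (1, 0)) (PN F p (fderiv ℝ (u r) p (1, 0))) +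
          cross7 (fderiv ℝ F p (0, 1)) (PN F p (fderiv ℝ (u r) p (0, 1))))
        - cross7 (F p) (u r p) := eq_sub_of_add_eq hrel.symm
  simp only [Dcone, DconeE]
  rw [hd.deriv, PN_of_mem F p hdm, hfd]
  simp only [ContinuousLinearMap.coe_smul', Pi.smul_apply]
  rw [PN_smul, PN_smul, cross7_add_right, cross7_smul_right, cross7_smul_right,
    cross7_smul_right, hDsub]
  match_scalars <;> field_simp <;> ring

lemma partBC_core (F : Pt → E7) (p : Pt)
    (hxx : ⟪F p, F p⟫ = 1)
    (hxa : ⟪F p, fderiv ℝ F p (1, 0)⟫ = 0)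
    (hbdef : fderiv ℝ F p (0, 1) = cross7 (F p) (fderiv ℝ F p (1, 0)))
    (ha0 : fderiv ℝ F p (1, 0) ≠ 0)
    (ν : Pt → E7) (hν : DifferentiableAt ℝ ν p) (hmem : ν p ∈ Nsp F p)
    (f : ℝ → ℝ) (D r : ℝ) (hr : 0 < r)
    (hD : HasDerivAt (fun s => s * f s) D r) :
    Dcone F (fun s q => f s • ν q) r p
      = (f r / r) • DSigC F ν p + ((D + f r) / r) • cross7 (F p) (ν p) := by
  have haN : ‖fderiv ℝ F p (1, 0)‖ ^ 2 ≠ 0 := pow_ne_zero 2 (norm_ne_zero_iff.mpr ha0)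
  have e1 : (fun s => s • f s • ν p) = fun s => (s * f s) • ν p :=
    funext fun s => smul_smul _ _ _
  have hd : HasDerivAt (fun s => s • f s • ν p) (D • ν p) r := by
    rw [e1]; exact hD.smul_const (ν p)
  have hdm : D • ν p ∈ Nsp F p := Submodule.smul_mem _ _ hmem
  have e2 : (fun q => r • f r • ν q) = fun q => (r * f r) • ν q :=
    funext fun q => smul_smul _ _ _
  have hfd : fderiv ℝ (fun q => r • f r • ν q) p = (r * f r) • fderiv ℝ ν p := by
    rw [e2]; exact fderiv_fun_const_smul hν _
  have hrel := DSig_rel F p hxx hxa hbdef ha0 ν hmem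
  have hDsub : DSigC F ν p =
      (‖fderiv ℝ F p (1, 0)‖ ^ 2)⁻¹ •
        (cross7 (fderiv ℝ F p (1, 0)) (PN F p (fderiv ℝ ν p (1, 0))) +
          cross7 (fderiv ℝ F p (0, 1)) (PN F p (fderiv ℝ ν p (0, 1))))
        - cross7 (F p) (ν p) := eq_sub_of_add_eq hrel.symm
  simp only [Dcone, DconeE]
  rw [hd.deriv, PN_of_mem F p hdm, hfd]
  simp only [ContinuousLinearMap.coe_smul', Pi.smul_apply]
  rw [PN_smul, PN_smul, cross7_smul_right, cross7_smul_right, cross7_smul_right, hDsub]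
  match_scalars <;> field_simp <;> ring

end AuxParts

/-- Let C be an associative cone in ℝ⁷ with link Σ ⊂ S⁶ (parametrized by a holomorphic
conformal chart F), 𝐃_C the Fueter operator of the cone, and 𝐃_Σ the Dirac operator of the
link.  Then, for every section u of NC, every ν ∈ C^∞(N_{S⁶}Σ), every λ ∈ ℝ and j ∈ ℕ:
(a) 𝐃_C u = J ∂_r u + (1/r) 𝐃_Σ u + (2/r) J u;
(b) 𝐃_C (r^{λ−1} ν) = r^{λ−2} (𝐃_Σ ν + (λ+1) J ν);
(c) 𝐃_C (r^{λ−1} (log r)^j ν)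
      = r^{λ−2} (log r)^j (𝐃_Σ ν + (λ+1) J ν) + j r^{λ−2} (log r)^{j−1} J ν. -/
theorem statement7 (F : Pt → E7)
    (hF : ContDiff ℝ (⊤ : ℕ∞) F)
    (hunit : ∀ p, ‖F p‖ = 1)
    (hholo : ∀ p c, fderiv ℝ F p (j0 c) = cross7 (F p) (fderiv ℝ F p c))
    (himm : ∀ p, fderiv ℝ F p (1, 0) ≠ 0)
    (ν : Pt → E7) (hν : ContDiff ℝ (⊤ : ℕ∞) ν) (hνn : ∀ p, ν p ∈ Nsp F p)
    (l : ℝ) (j : ℕ) (r : ℝ) (hr : 0 < r) (p : Pt) :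
    (∀ u : ℝ → Pt → E7, (∀ q, Differentiable ℝ fun s => u s q) →
        (∀ s, Differentiable ℝ (u s)) → (∀ s q, u s q ∈ Nsp F q) →
        Dcone F u r p =
          cross7 (F p) (deriv (fun s => u s p) r) + r⁻¹ • DSigC F (u r) p +
            (2 / r) • cross7 (F p) (u r p)) ∧
      Dcone F (fun s q => s ^ (l - 1) • ν q) r p
          = r ^ (l - 2) • (DSigC F ν p + (l + 1) • cross7 (F p) (ν p)) ∧
      Dcone F (fun s q => (s ^ (l - 1) * Real.log s ^ j) • ν q) r p
          = (r ^ (l - 2) * Real.log r ^ j) • (DSigC F ν p + (l + 1) • cross7 (F p) (ν p))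
            + ((j : ℝ) * (r ^ (l - 2) * Real.log r ^ (j - 1))) • cross7 (F p) (ν p) := by
  have hdF := hF.differentiable (by norm_num)
  have hdv := hν.differentiable (by norm_num)
  have hxx : ⟪F p, F p⟫ = 1 := by
    rw [real_inner_self_eq_norm_sq, hunit p]; norm_num
  have hxa : ⟪F p, fderiv ℝ F p (1, 0)⟫ = 0 := by
    have hconst : (fun q => ⟪F q, F q⟫) = fun _ : Pt => (1 : ℝ) := funext fun q => by
      rw [real_inner_self_eq_norm_sq, hunit q]; norm_num
    have h0 : fderiv ℝ (fun q => ⟪F q, F q⟫) p (1, 0) = 0 := by rw [hconst]; simp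
    have h1 := fderiv_inner_apply ℝ (hdF p) (hdF p) ((1 : ℝ), (0 : ℝ))
    rw [h0] at h1
    have hc := real_inner_comm (F p) (fderiv ℝ F p (1, 0))
    linarith [h1.symm]
  have hbdef : fderiv ℝ F p (0, 1) = cross7 (F p) (fderiv ℝ F p (1, 0)) := by
    have h := hholo p (1, 0)
    simpa [j0] using h
  have h1 : r ^ (l - 1) = r ^ l / r := by rw [Real.rpow_sub hr, Real.rpow_one]
  have h2 : r ^ (l - 2) = r ^ l / (r * r) := by
    rw [Real.rpow_sub hr]
    congr 1
    rw [show (2 : ℝ) = (1 : ℝ) + 1 by norm_num, Real.rpow_add hr, Real.rpow_one]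
  refine ⟨fun u hu1 hu2 hu3 => partA F p hxx hxa hbdef (himm p) r hr u hu1 hu2 hu3, ?_, ?_⟩
  · have hE : (fun s : ℝ => s * s ^ (l - 1)) =ᶠ[nhds r] fun s : ℝ => s ^ l := by
      filter_upwards [eventually_gt_nhds hr] with s hs
      rw [show s * s ^ (l - 1) = s ^ (1 : ℝ) * s ^ (l - 1) by rw [Real.rpow_one],
        ← Real.rpow_add hs]
      norm_num
    have hD : HasDerivAt (fun s : ℝ => s * s ^ (l - 1)) (l * r ^ (l - 1)) r :=
      (Real.hasDerivAt_rpow_const (Or.inl hr.ne')).congr_of_eventuallyEq hE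
    refine (partBC_core F p hxx hxa hbdef (himm p) ν (hdv p) (hνn p) _ _ r hr hD).trans ?_
    match_scalars <;> simp only [h1, h2] <;> field_simp <;> ring
  · have hE : (fun s : ℝ => s * (s ^ (l - 1) * Real.log s ^ j)) =ᶠ[nhds r]
        fun s : ℝ => s ^ l * Real.log s ^ j := by
      filter_upwards [eventually_gt_nhds hr] with s hs
      rw [← mul_assoc, show s * s ^ (l - 1) = s ^ (1 : ℝ) * s ^ (l - 1) by rw [Real.rpow_one],
        ← Real.rpow_add hs]
      norm_num
    have hD : HasDerivAt (fun s : ℝ => s * (s ^ (l - 1) * Real.log s ^ j))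
        (l * r ^ (l - 1) * Real.log r ^ j + r ^ l * (↑j * Real.log r ^ (j - 1) * r⁻¹)) r :=
      ((Real.hasDerivAt_rpow_const (Or.inl hr.ne')).mul
        ((Real.hasDerivAt_log hr.ne').pow j)).congr_of_eventuallyEq hE
    refine (partBC_core F p hxx hxa hbdef (himm p) ν (hdv p) (hνn p) _ _ r hr hD).trans ?_
    match_scalars <;> simp only [h1, h2] <;> field_simp <;> ring
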